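/- Let f, g : (0,∞) → ℝ be convex with f(1) = g(1) = 0, and suppose the limits f(0), f*(0), g(0), g*(0) all exist as finite reals. Then every (f,g)-achievable point is 4-achievable: for every n and all probability vectors P, Q of length n there exist probability vectors P', Q' of length 4 such that D_f(P',Q') = D_f(P,Q) and D_g(P',Q') = D_g(P,Q). -/

import Mathlib

open Finset Filter Topology

/-- A probability vector of length `n`: nonnegative entries summing to 1. -/
def IsProbVec {n : ℕ} (P : Fin n → ℝ) : Prop :=
  (∀ i, 0 ≤ P i) ∧ ∑ i, P i = 1

/-- The `f`-divergence of two probability vectors, where `f0` stands for the limit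
`f(0) = lim_{t→0+} f(t)` and `fstar0` for `f*(0) = lim_{t→∞} f(t)/t`. -/
noncomputable def fDiv {n : ℕ} (f : ℝ → ℝ) (f0 fstar0 : ℝ) (P Q : Fin n → ℝ) : ℝ :=
  ∑ i, if 0 < Q i then Q i * (if 0 < P i then f (P i / Q i) else f0) else fstar0 * P i

section Aux

variable (f g : ℝ → ℝ) (f0 fstar0 g0 gstar0 : ℝ)

/-- An "atom vector": encodes a single coordinate pair `(p, q)` of a pair of probability
vectors as the 4-vector `(q, p, contribution to D_f, contribution to D_g)`. -/
def DivAtom (v : Fin 4 → ℝ) : Prop :=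
  (∃ q r : ℝ, 0 ≤ q ∧ 0 < r ∧ v = q • ![1, r, f r, g r]) ∨
  (∃ q : ℝ, 0 ≤ q ∧ v = q • ![1, 0, f0, g0]) ∨
  (∃ p : ℝ, 0 ≤ p ∧ v = p • ![0, 1, fstar0, gstar0])

lemma DivAtom.zero : DivAtom f g f0 fstar0 g0 gstar0 0 :=
  Or.inr <| Or.inl ⟨0, le_refl 0, (zero_smul ℝ _).symm⟩

lemma DivAtom.smul {v : Fin 4 → ℝ} (c : ℝ) (hc : 0 ≤ c)
    (h : DivAtom f g f0 fstar0 g0 gstar0 v) :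
    DivAtom f g f0 fstar0 g0 gstar0 (c • v) := by
  rcases h with ⟨q, r, hq, hr, rfl⟩ | ⟨q, hq, rfl⟩ | ⟨p, hp, rfl⟩
  · exact Or.inl ⟨c * q, r, mul_nonneg hc hq, hr, smul_smul c q _⟩
  · exact Or.inr <| Or.inl ⟨c * q, mul_nonneg hc hq, smul_smul c q _⟩
  · exact Or.inr <| Or.inr ⟨c * p, mul_nonneg hc hp, smul_smul c p _⟩

/-- One step of conical Carathéodory: a sum of `m+1 ≥ 5` atom vectors in `ℝ⁴`
is a sum of `m` atom vectors. -/
lemma divAtom_drop (m : ℕ) (hm : 4 ≤ m) (v : Fin (m+1) → Fin 4 → ℝ)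
    (hv : ∀ i, DivAtom f g f0 fstar0 g0 gstar0 (v i)) :
    ∃ w : Fin m → Fin 4 → ℝ, (∀ j, DivAtom f g f0 fstar0 g0 gstar0 (w j)) ∧
      ∑ j, w j = ∑ i, v i := by
  have hdep : ¬ LinearIndependent ℝ v := by
    intro h
    have := h.fintype_card_le_finrank
    simp only [Fintype.card_fin] at this
    rw [Module.finrank_fintype_fun_eq_card] at this
    simp at this
    omega
  obtain ⟨a, ha, i, hi⟩ := Fintype.not_linearIndependent_iff.mp hdep
  obtain ⟨b, hb0, j0, hj0⟩ : ∃ b : Fin (m+1) → ℝ,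
      ∑ k, b k • v k = 0 ∧ ∃ j, 0 < b j := by
    rcases (Ne.lt_or_gt hi) with h | h
    · refine ⟨fun k => -a k, ?_, i, by show 0 < -(a i); linarith⟩
      have : ∑ k, (fun k => -a k) k • v k = -∑ k, a k • v k := by
        rw [← Finset.sum_neg_distrib]
        exact Finset.sum_congr rfl fun k _ => by simp [neg_smul]
      rw [this, ha, neg_zero]
    · exact ⟨a, ha, i, h⟩
  set s : Finset (Fin (m+1)) := univ.filter (fun k => 0 < b k) with hs
  have hsne : s.Nonempty := ⟨j0, by simp [hs, hj0]⟩
  set t : ℝ := s.inf' hsne (fun k => (b k)⁻¹) with ht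
  obtain ⟨i0, hi0s, hi0⟩ := s.exists_mem_eq_inf' hsne (fun k => (b k)⁻¹)
  have hbi0 : 0 < b i0 := by
    have := hi0s
    simp only [hs, Finset.mem_filter] at this
    exact this.2
  have ht0 : 0 < t := by rw [ht, hi0]; exact inv_pos.mpr hbi0
  have hc : ∀ k, 0 ≤ 1 - t * b k := by
    intro k
    by_cases hk : 0 < b k
    · have h1 : t ≤ (b k)⁻¹ := Finset.inf'_le _ (by simp [hs, hk])
      have h2 := mul_le_mul_of_nonneg_right h1 hk.le
      rw [inv_mul_cancel₀ hk.ne'] at h2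
      linarith
    · nlinarith [not_lt.mp hk]
  have hci0 : 1 - t * b i0 = 0 := by
    rw [ht, hi0, inv_mul_cancel₀ hbi0.ne', sub_self]
  refine ⟨fun j => (1 - t * b (i0.succAbove j)) • v (i0.succAbove j),
    fun j => DivAtom.smul _ _ _ _ _ _ _ (hc _) (hv _), ?_⟩
  have hsum : ∑ k, (1 - t * b k) • v k = ∑ k, v k := by
    have heach : ∀ k, (1 - t * b k) • v k = v k - t • (b k • v k) := by
      intro k; rw [sub_smul, one_smul, smul_smul]
    calc ∑ k, (1 - t * b k) • v k = ∑ k, (v k - t • (b k • v k)) :=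
          Finset.sum_congr rfl fun k _ => heach k
      _ = ∑ k, v k - t • ∑ k, b k • v k := by
          rw [Finset.sum_sub_distrib, Finset.smul_sum]
      _ = ∑ k, v k := by rw [hb0, smul_zero, sub_zero]
  calc ∑ j, (1 - t * b (i0.succAbove j)) • v (i0.succAbove j)
      = ∑ k, (1 - t * b k) • v k := by
        rw [Fin.sum_univ_succAbove (fun k => (1 - t * b k) • v k) i0, hci0, zero_smul,
          zero_add]
    _ = ∑ k, v k := hsum

/-- Conical Carathéodory: a sum of `m+4` atom vectors in `ℝ⁴` is a sum of `4`. -/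
lemma divAtom_four (m : ℕ) (v : Fin (m+4) → Fin 4 → ℝ)
    (hv : ∀ i, DivAtom f g f0 fstar0 g0 gstar0 (v i)) :
    ∃ w : Fin 4 → Fin 4 → ℝ, (∀ j, DivAtom f g f0 fstar0 g0 gstar0 (w j)) ∧
      ∑ j, w j = ∑ i, v i := by
  induction m with
  | zero => exact ⟨v, hv, rfl⟩
  | succ k ih =>
      obtain ⟨w, hw, hws⟩ := divAtom_drop f g f0 fstar0 g0 gstar0 (k + 4) (by omega)
        (fun i : Fin (k + 4 + 1) => v (Fin.cast (by omega) i))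
        (fun i => hv _)
      obtain ⟨w', hw', hw's⟩ := ih w hw
      refine ⟨w', hw', ?_⟩
      rw [hw's, hws]
      exact Fintype.sum_equiv (finCongr (by omega)) _ _ (fun i => rfl)

/-- Padding: any finite family of atom vectors can be extended to length `n+4`
with the same sum. -/
lemma divAtom_pad (n : ℕ) (v : Fin n → Fin 4 → ℝ)
    (hv : ∀ i, DivAtom f g f0 fstar0 g0 gstar0 (v i)) :
    ∃ v' : Fin (n+4) → Fin 4 → ℝ, (∀ i, DivAtom f g f0 fstar0 g0 gstar0 (v' i)) ∧
      ∑ i, v' i = ∑ i, v i := by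
  have hle : n ≤ n + 4 := by omega
  refine ⟨fun i => if h : (i : ℕ) < n then v ⟨i, h⟩ else 0, ?_, ?_⟩
  · intro i
    by_cases h : (i : ℕ) < n
    · simpa [h] using hv ⟨i, h⟩
    · simpa [h] using DivAtom.zero f g f0 fstar0 g0 gstar0
  · have h1 : ∑ i ∈ (univ : Finset (Fin n)).map (Fin.castLEEmb hle),
        (fun i : Fin (n+4) => if h : (i : ℕ) < n then v ⟨i, h⟩ else 0) i
        = ∑ i : Fin (n+4), (if h : (i : ℕ) < n then v ⟨i, h⟩ else 0) := by
      refine Finset.sum_subset (Finset.subset_univ _) (fun x _ hx => ?_)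
      have hxn : ¬ (x : ℕ) < n := by
        intro hlt
        exact hx (Finset.mem_map.mpr ⟨⟨x, hlt⟩, Finset.mem_univ _, by
          ext; simp⟩)
      simp [hxn]
    rw [← h1, Finset.sum_map]
    refine Finset.sum_congr rfl fun i _ => ?_
    have h : ((Fin.castLEEmb hle i : Fin (n+4)) : ℕ) < n := by simp
    simp only [h, dif_pos]
    rfl

/-- Evaluation of the divergence contributions of an atom vector. -/
lemma divAtom_eval {v : Fin 4 → ℝ} (h : DivAtom f g f0 fstar0 g0 gstar0 v) :
    0 ≤ v 0 ∧ 0 ≤ v 1 ∧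
    (if 0 < v 0 then v 0 * (if 0 < v 1 then f (v 1 / v 0) else f0) else fstar0 * v 1) = v 2 ∧
    (if 0 < v 0 then v 0 * (if 0 < v 1 then g (v 1 / v 0) else g0) else gstar0 * v 1) = v 3 := by
  rcases h with ⟨q, r, hq, hr, rfl⟩ | ⟨q, hq, rfl⟩ | ⟨p, hp, rfl⟩
  · have e0 : (q • ![1, r, f r, g r]) 0 = q * 1 := rfl
    have e1 : (q • ![1, r, f r, g r]) 1 = q * r := rfl
    have e2 : (q • ![1, r, f r, g r]) 2 = q * f r := rfl
    have e3 : (q • ![1, r, f r, g r]) 3 = q * g r := rfl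
    rw [e0, e1, e2, e3]
    rcases hq.lt_or_eq with hq' | hq'
    · have h0 : 0 < q * 1 := by linarith
      have h1 : 0 < q * r := mul_pos hq' hr
      have hd : q * r / (q * 1) = r := by field_simp
      refine ⟨by linarith, h1.le, ?_, ?_⟩ <;> rw [if_pos h0, if_pos h1, hd] <;> ring
    · rw [← hq']
      norm_num
  · have e0 : (q • ![1, 0, f0, g0]) 0 = q * 1 := rfl
    have e1 : (q • ![1, 0, f0, g0]) 1 = q * 0 := rfl
    have e2 : (q • ![1, 0, f0, g0]) 2 = q * f0 := rfl
    have e3 : (q • ![1, 0, f0, g0]) 3 = q * g0 := rfl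
    rw [e0, e1, e2, e3]
    rcases hq.lt_or_eq with hq' | hq'
    · have h0 : 0 < q * 1 := by linarith
      have h1 : ¬ 0 < q * 0 := by norm_num
      refine ⟨by linarith, by norm_num, ?_, ?_⟩ <;> rw [if_pos h0, if_neg h1] <;> ring
    · rw [← hq']
      norm_num
  · have e0 : (p • ![0, 1, fstar0, gstar0]) 0 = p * 0 := rfl
    have e1 : (p • ![0, 1, fstar0, gstar0]) 1 = p * 1 := rfl
    have e2 : (p • ![0, 1, fstar0, gstar0]) 2 = p * fstar0 := rfl
    have e3 : (p • ![0, 1, fstar0, gstar0]) 3 = p * gstar0 := rfl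
    rw [e0, e1, e2, e3]
    have h0 : ¬ 0 < p * 0 := by norm_num
    refine ⟨by norm_num, by linarith, ?_, ?_⟩ <;> rw [if_neg h0] <;> ring

end Aux

/-- Every `(f,g)`-achievable point is `4`-achievable. -/
theorem achievable_is_four_achievable (f g : ℝ → ℝ) (f0 fstar0 g0 gstar0 : ℝ)
    (hf : ConvexOn ℝ (Set.Ioi 0) f) (hf1 : f 1 = 0)
    (hg : ConvexOn ℝ (Set.Ioi 0) g) (hg1 : g 1 = 0)
    (hf0 : Tendsto f (𝓝[>] (0:ℝ)) (𝓝 f0))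
    (hfs : Tendsto (fun t => f t / t) atTop (𝓝 fstar0))
    (hg0 : Tendsto g (𝓝[>] (0:ℝ)) (𝓝 g0))
    (hgs : Tendsto (fun t => g t / t) atTop (𝓝 gstar0))
    (n : ℕ) (P Q : Fin n → ℝ) (hP : IsProbVec P) (hQ : IsProbVec Q) :
    ∃ P' Q' : Fin 4 → ℝ, IsProbVec P' ∧ IsProbVec Q' ∧
      fDiv f f0 fstar0 P' Q' = fDiv f f0 fstar0 P Q ∧
      fDiv g g0 gstar0 P' Q' = fDiv g g0 gstar0 P Q := by
  classical
  -- encode each coordinate pair as an atom vector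
  set v : Fin n → Fin 4 → ℝ := fun i =>
    if 0 < Q i then
      (if 0 < P i then Q i • ![1, P i / Q i, f (P i / Q i), g (P i / Q i)]
        else Q i • ![1, 0, f0, g0])
    else P i • ![0, 1, fstar0, gstar0] with hv_def
  have hatom : ∀ i, DivAtom f g f0 fstar0 g0 gstar0 (v i) := by
    intro i
    rw [hv_def]
    by_cases h1 : 0 < Q i
    · by_cases h2 : 0 < P i
      · simp only [h1, h2, if_true]
        exact Or.inl ⟨Q i, P i / Q i, (hQ.1 i), div_pos h2 h1, rfl⟩
      · simp only [h1, h2, if_true, if_false]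
        exact Or.inr <| Or.inl ⟨Q i, hQ.1 i, rfl⟩
    · simp only [h1, if_false]
      exact Or.inr <| Or.inr ⟨P i, hP.1 i, rfl⟩
  -- the coordinates of each atom vector
  have hv0 : ∀ i, v i 0 = Q i := by
    intro i
    rw [hv_def]
    by_cases h1 : 0 < Q i <;> by_cases h2 : 0 < P i <;>
      simp only [h1, h2, if_true, if_false]
    · show Q i * 1 = Q i; ring
    · show Q i * 1 = Q i; ring
    · show P i * 0 = Q i
      rw [mul_zero]
      exact (le_antisymm (not_lt.mp h1) (hQ.1 i)).symm
    · show P i * 0 = Q i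
      rw [mul_zero]
      exact (le_antisymm (not_lt.mp h1) (hQ.1 i)).symm
  have hv1 : ∀ i, v i 1 = P i := by
    intro i
    rw [hv_def]
    by_cases h1 : 0 < Q i <;> by_cases h2 : 0 < P i <;>
      simp only [h1, h2, if_true, if_false]
    · show Q i * (P i / Q i) = P i
      field_simp
    · show Q i * 0 = P i
      rw [mul_zero]
      exact (le_antisymm (not_lt.mp h2) (hP.1 i)).symm
    · show P i * 1 = P i; ring
    · show P i * 1 = P i; ring
  have hv2 : ∀ i, v i 2
      = (if 0 < Q i then Q i * (if 0 < P i then f (P i / Q i) else f0) else fstar0 * P i) := by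
    intro i
    rw [hv_def]
    by_cases h1 : 0 < Q i <;> by_cases h2 : 0 < P i <;>
      simp only [h1, h2, if_true, if_false]
    · rfl
    · rfl
    · show P i * fstar0 = fstar0 * P i; ring
    · show P i * fstar0 = fstar0 * P i; ring
  have hv3 : ∀ i, v i 3
      = (if 0 < Q i then Q i * (if 0 < P i then g (P i / Q i) else g0) else gstar0 * P i) := by
    intro i
    rw [hv_def]
    by_cases h1 : 0 < Q i <;> by_cases h2 : 0 < P i <;>
      simp only [h1, h2, if_true, if_false]
    · rfl
    · rfl
    · show P i * gstar0 = gstar0 * P i; ring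
    · show P i * gstar0 = gstar0 * P i; ring
  -- reduce to four atoms
  obtain ⟨v', hv', hv's⟩ := divAtom_pad f g f0 fstar0 g0 gstar0 n v hatom
  obtain ⟨w, hw, hws⟩ := divAtom_four f g f0 fstar0 g0 gstar0 n v' hv'
  have hsum : ∑ j, w j = ∑ i, v i := by rw [hws, hv's]
  have hsumk : ∀ k : Fin 4, ∑ j, w j k = ∑ i, v i k := by
    intro k
    have := congrFun hsum k
    rwa [Finset.sum_apply, Finset.sum_apply] at this
  refine ⟨fun j => w j 1, fun j => w j 0, ⟨fun j => (divAtom_eval f g f0 fstar0 g0 gstar0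
    (hw j)).2.1, ?_⟩, ⟨fun j => (divAtom_eval f g f0 fstar0 g0 gstar0 (hw j)).1, ?_⟩, ?_, ?_⟩
  · rw [hsumk 1]
    calc ∑ i, v i 1 = ∑ i, P i := Finset.sum_congr rfl fun i _ => hv1 i
      _ = 1 := hP.2
  · rw [hsumk 0]
    calc ∑ i, v i 0 = ∑ i, Q i := Finset.sum_congr rfl fun i _ => hv0 i
      _ = 1 := hQ.2
  · unfold fDiv
    calc ∑ j, (if 0 < w j 0 then w j 0 * (if 0 < w j 1 then f (w j 1 / w j 0) else f0)
          else fstar0 * w j 1)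
        = ∑ j, w j 2 := Finset.sum_congr rfl fun j _ =>
            (divAtom_eval f g f0 fstar0 g0 gstar0 (hw j)).2.2.1
      _ = ∑ i, v i 2 := hsumk 2
      _ = _ := Finset.sum_congr rfl fun i _ => hv2 i
  · unfold fDiv
    calc ∑ j, (if 0 < w j 0 then w j 0 * (if 0 < w j 1 then g (w j 1 / w j 0) else g0)
          else gstar0 * w j 1)
        = ∑ j, w j 3 := Finset.sum_congr rfl fun j _ =>
            (divAtom_eval f g f0 fstar0 g0 gstar0 (hw j)).2.2.2
      _ = ∑ i, v i 3 := hsumk 3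
      _ = _ := Finset.sum_congr rfl fun i _ => hv3 i
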